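/- In Minty's alternative, the separating vector in V^⊥ can be chosen to be an elementary vector of V^⊥: if V ∩ (I_1 × ⋯ × I_n) = ∅ for nonempty intervals I_j, then there exists an elementary vector v ∈ V^⊥ with vᵀz > 0 for all z in the product of intervals. -/

import Mathlib

open Module
open scoped Classical



/-- The orthogonal complement of `V` in `ℝⁿ` with respect to the standard inner product. -/
def perp {n : ℕ} (V : Submodule ℝ (Fin n → ℝ)) : Submodule ℝ (Fin n → ℝ) where
  carrier := {v | ∀ x ∈ V, ∑ i, v i * x i = 0}
  add_mem' := by
    intro a b ha hb x hx
    simp only [Set.mem_setOf_eq, Pi.add_apply, add_mul, Finset.sum_add_distrib,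
      ha x hx, hb x hx, add_zero]
  zero_mem' := by intro x hx; simp
  smul_mem' := by
    intro c a ha x hx
    simp only [Set.mem_setOf_eq, Pi.smul_apply, smul_eq_mul, mul_assoc,
      ← Finset.mul_sum, ha x hx, mul_zero]

/-- `v` is an elementary vector of the subspace `V`: a nonzero vector of `V` with minimal
support among nonzero vectors of `V`. -/
def IsElementary {Q : Type*} [Field Q] {n : ℕ} (V : Submodule Q (Fin n → Q))
    (v : Fin n → Q) : Prop :=
  v ∈ V ∧ v ≠ 0 ∧
    ∀ x ∈ V, x ≠ 0 → {i | x i ≠ 0} ⊆ {i | v i ≠ 0} → {i | x i ≠ 0} = {i | v i ≠ 0}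


section MintyAux


lemma segment_le {a b : ℝ} (h : ∀ t : ℝ, 0 ≤ t → t < 1 → (1 - t) * a + t * b < 0) : b ≤ 0 := by
  by_contra hb
  push_neg at hb
  have ha : a < 0 := by simpa using h 0 le_rfl one_pos
  set t : ℝ := -a / (b - a) with ht
  have hba : 0 < b - a := by linarith
  have ht0 : 0 ≤ t := div_nonneg (by linarith) hba.le
  have ht1 : t < 1 := by
    rw [div_lt_one hba]; linarith
  have := h t ht0 ht1
  have : (1 - t) * a + t * b = 0 := by
    rw [ht]
    field_simp
    ring
  linarith [h t ht0 ht1, this]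

/-- Proper separation of a convex set from 0. -/
lemma proper_sep : ∀ (m : ℕ) (E : Type) [NormedAddCommGroup E] [InnerProductSpace ℝ E]
    [FiniteDimensional ℝ E] (C : Set E), finrank ℝ E ≤ m → Convex ℝ C → C.Nonempty →
    (0 : E) ∉ C →
    ∃ v : E, (∀ c ∈ C, 0 ≤ (inner ℝ v c : ℝ)) ∧ ∃ c ∈ C, 0 < (inner ℝ v c : ℝ) := by
  intro m
  induction m with
  | zero =>
    intro E _ _ _ C hrank hconv hne h0
    exfalso
    have : finrank ℝ E = 0 := le_antisymm hrank (Nat.zero_le _)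
    have hsub : Subsingleton E := finrank_zero_iff.mp this
    obtain ⟨c, hc⟩ := hne
    exact h0 (by rwa [Subsingleton.elim (0 : E) c])
  | succ m ih =>
    intro E _ _ _ C hrank hconv hne h0
    by_cases htop : affineSpan ℝ C = ⊤
    · -- full-dimensional case
      have hint : (interior C).Nonempty :=
        (hconv.interior_nonempty_iff_affineSpan_eq_top).mpr htop
      obtain ⟨f, hf⟩ := geometric_hahn_banach_open_point (hconv.interior) isOpen_interior
        (fun h => h0 (interior_subset h))
      -- hf : ∀ a ∈ interior C, f a < f 0
      simp only [map_zero] at hf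
      obtain ⟨c0, hc0⟩ := hint
      have hfC : ∀ c ∈ C, f c ≤ 0 := by
        intro c hc
        apply segment_le (a := f c0) (b := f c)
        intro t ht0 ht1
        have hmem : (1 - t) • c0 + t • c ∈ interior C :=
          hconv.combo_interior_self_mem_interior hc0 hc (by linarith) ht0 (by ring)
        have := hf _ hmem
        simpa [map_add, map_smul, smul_eq_mul] using this
      set v : E := (InnerProductSpace.toDual ℝ E).symm (-f) with hv
      have hvf : ∀ x : E, (inner ℝ v x : ℝ) = -f x := by
        intro x
        rw [hv, InnerProductSpace.toDual_symm_apply]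
        simp
      refine ⟨v, fun c hc => ?_, c0, interior_subset hc0, ?_⟩
      · rw [hvf]; linarith [hfC c hc]
      · rw [hvf]; linarith [hf c0 hc0]
    · -- contained in a hyperplane
      obtain ⟨c0, hc0⟩ := hne
      have hdirne : (affineSpan ℝ C).direction ≠ ⊤ := by
        intro h
        exact htop ((AffineSubspace.direction_eq_top_iff_of_nonempty ⟨c0, subset_affineSpan ℝ C hc0⟩).mp h)
      have horth : ((affineSpan ℝ C).direction)ᗮ ≠ ⊥ := by
        intro h
        exact hdirne (Submodule.orthogonal_eq_bot_iff.mp h)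
      obtain ⟨u, hu_mem, hu_ne⟩ := Submodule.exists_mem_ne_zero_of_ne_bot horth
      have hconst : ∀ c ∈ C, (inner ℝ u c : ℝ) = (inner ℝ u c0 : ℝ) := by
        intro c hc
        have hd : c - c0 ∈ (affineSpan ℝ C).direction := by
          have := AffineSubspace.vsub_mem_direction (subset_affineSpan ℝ C hc)
            (subset_affineSpan ℝ C hc0)
          simpa using this
        have h1 : (inner ℝ (c - c0) u : ℝ) = 0 := hu_mem _ hd
        rw [inner_sub_left] at h1
        have h2 := real_inner_comm c u
        have h3 := real_inner_comm c0 u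
        linarith [h1, h2, h3]
      rcases lt_trichotomy (inner ℝ u c0 : ℝ) 0 with hd | hd | hd
      · refine ⟨-u, fun c hc => ?_, c0, hc0, ?_⟩
        · rw [inner_neg_left, hconst c hc]; linarith
        · rw [inner_neg_left]; linarith
      · -- recurse into the orthogonal complement of span{u}
        set K := (Submodule.span ℝ {u})ᗮ with hK
        have hCK : ∀ c ∈ C, c ∈ K := by
          intro c hc
          rw [hK, Submodule.mem_orthogonal_singleton_iff_inner_left]
          rw [real_inner_comm, hconst c hc, hd]
        have hrankK : finrank ℝ K ≤ m := by
          have h1 : finrank ℝ (Submodule.span ℝ {u}) + finrank ℝ K = finrank ℝ E :=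
            Submodule.finrank_add_finrank_orthogonal _
          rw [finrank_span_singleton hu_ne] at h1
          omega
        set C' : Set K := ((↑) : K → E) ⁻¹' C with hC'
        have hconv' : Convex ℝ C' := hconv.linear_preimage K.subtype
        have hne' : C'.Nonempty := ⟨⟨c0, hCK c0 hc0⟩, hc0⟩
        have h0' : (0 : K) ∉ C' := by
          intro h
          rw [hC', Set.mem_preimage, Submodule.coe_zero] at h
          exact h0 h
        obtain ⟨v', hv1, c', hc', hv2⟩ := ih K C' hrankK hconv' hne' h0'
        refine ⟨(v' : E), fun c hc => ?_, (c' : E), hc', ?_⟩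
        · have := hv1 ⟨c, hCK c hc⟩ hc
          rwa [Submodule.coe_inner] at this
        · rwa [Submodule.coe_inner] at hv2
      · exact ⟨u, fun c hc => by rw [hconst c hc]; linarith, c0, hc0, hd⟩

lemma euclid_inner {n : ℕ} (v c : EuclideanSpace ℝ (Fin n)) :
    (inner ℝ v c : ℝ) = ∑ i, v i * c i := by
  rw [PiLp.inner_apply]
  simp [RCLike.inner_apply, mul_comm]

lemma sep_fin {n : ℕ} (C : Set (Fin n → ℝ)) (hC : Convex ℝ C) (hne : C.Nonempty)
    (h0 : (0 : Fin n → ℝ) ∉ C) :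
    ∃ v : Fin n → ℝ, (∀ c ∈ C, 0 ≤ ∑ i, v i * c i) ∧ ∃ c ∈ C, 0 < ∑ i, v i * c i := by
  obtain ⟨v, h1, c, hc, h2⟩ := proper_sep (finrank ℝ (EuclideanSpace ℝ (Fin n)))
    (EuclideanSpace ℝ (Fin n)) (WithLp.ofLp ⁻¹' C) le_rfl
    (hC.linear_preimage (WithLp.linearEquiv 2 ℝ (Fin n → ℝ)).toLinearMap)
    (by obtain ⟨c, hc⟩ := hne; exact ⟨WithLp.toLp 2 c, hc⟩) (by simpa using h0)
  refine ⟨WithLp.ofLp v, fun c' hc' => ?_, WithLp.ofLp c, hc, ?_⟩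
  · have := h1 (WithLp.toLp 2 c') hc'
    simpa [euclid_inner] using this
  · rwa [euclid_inner] at h2

lemma dot_update {n : ℕ} (v z : Fin n → ℝ) (i : Fin n) (t : ℝ) :
    ∑ j, v j * Function.update z i t j = (∑ j, v j * z j) + v i * (t - z i) := by
  have h : ∀ j, v j * Function.update z i t j
      = v j * z j + (if j = i then v i * (t - z i) else 0) := by
    intro j
    by_cases h : j = i
    · subst h; simp [Function.update_apply]; ring
    · simp [Function.update_apply, h]
  rw [Finset.sum_congr rfl (fun j _ => h j), Finset.sum_add_distrib,
    Finset.sum_ite_eq' Finset.univ i (fun _ => v i * (t - z i))]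
  simp

lemma update_memK {n : ℕ} {I : Fin n → Set ℝ} {z : Fin n → ℝ} (hz : ∀ j, z j ∈ I j)
    {i : Fin n} {t : ℝ} (ht : t ∈ I i) : ∀ j, Function.update z i t j ∈ I j := by
  intro j
  by_cases h : j = i
  · subst h; simpa using ht
  · simpa [Function.update_apply, h] using hz j

/-- Separation step for Minty. -/
lemma minty_sep {n : ℕ} (V : Submodule ℝ (Fin n → ℝ)) (I : Fin n → Set ℝ)
    (hne : ∀ i, (I i).Nonempty) (hconn : ∀ i, (I i).OrdConnected)
    (hempty : ¬∃ x ∈ V, ∀ i, x i ∈ I i) :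
    ∃ v : Fin n → ℝ, (∀ x ∈ V, ∑ i, v i * x i = 0) ∧
      (∀ z : Fin n → ℝ, (∀ i, z i ∈ I i) → 0 ≤ ∑ i, v i * z i) ∧
      (∃ z : Fin n → ℝ, (∀ i, z i ∈ I i) ∧ 0 < ∑ i, v i * z i) := by
  classical
  set K : Set (Fin n → ℝ) := Set.univ.pi I with hKdef
  have hKconv : Convex ℝ K := convex_pi (fun i _ => (convex_iff_ordConnected).mpr (hconn i))
  have hKne : K.Nonempty := by
    refine ⟨fun i => (hne i).choose, ?_⟩
    intro i _
    exact (hne i).choose_spec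
  open Pointwise in
  have main : ∃ v : Fin n → ℝ, (∀ c ∈ K - (V : Set (Fin n → ℝ)), 0 ≤ ∑ i, v i * c i) ∧
      ∃ c ∈ K - (V : Set (Fin n → ℝ)), 0 < ∑ i, v i * c i := by
    apply sep_fin _ (hKconv.sub V.convex)
    · obtain ⟨z, hz⟩ := hKne
      exact ⟨z - 0, Set.sub_mem_sub hz V.zero_mem⟩
    · intro h0
      rw [Set.mem_sub] at h0
      obtain ⟨z, hz, x, hx, hzx⟩ := h0
      refine hempty ⟨x, hx, fun i => ?_⟩
      have : z = x := by
        have := sub_eq_zero.mp hzx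
        exact this
      rw [← this]
      exact hz i (Set.mem_univ i)
  obtain ⟨v, h1, c, hcmem, h2⟩ := main
  have hperp : ∀ x ∈ V, ∑ i, v i * x i = 0 := by
    intro x hx
    obtain ⟨z0, hz0⟩ := hKne
    by_contra hvx
    -- choose t with dot v z0 - t * dot v x < 0
    set a := ∑ i, v i * z0 i with ha
    set b := ∑ i, v i * x i with hb
    set t := (a + 1) / b with htdef
    have hmem : z0 - t • x ∈ K - (V : Set (Fin n → ℝ)) :=
      Set.sub_mem_sub hz0 (V.smul_mem t hx)
    have := h1 _ hmem
    have hdot : ∑ i, v i * (z0 - t • x) i = a - t * b := by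
      simp only [Pi.sub_apply, Pi.smul_apply, smul_eq_mul, mul_sub, Finset.sum_sub_distrib]
      rw [ha, hb, Finset.mul_sum]
      congr 1
      apply Finset.sum_congr rfl
      intro j _
      ring
    rw [hdot] at this
    have htb : t * b = a + 1 := by
      rw [htdef]; field_simp
    linarith
  refine ⟨v, hperp, ?_, ?_⟩
  · intro z hz
    have hmem : z - 0 ∈ K - (V : Set (Fin n → ℝ)) :=
      Set.sub_mem_sub (by intro i _; exact hz i) V.zero_mem
    have := h1 _ hmem
    simpa using this
  · rw [Set.mem_sub] at hcmem
    obtain ⟨z, hz, x, hx, hzx⟩ := hcmem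
    refine ⟨z, fun i => hz i (Set.mem_univ i), ?_⟩
    have hzc : ∑ i, v i * c i = (∑ i, v i * z i) - ∑ i, v i * x i := by
      rw [← hzx]
      simp only [Pi.sub_apply, mul_sub, Finset.sum_sub_distrib]
    rw [hzc, hperp x hx] at h2
    linarith

lemma minty_core {n : ℕ} : ∀ (N : ℕ) (V : Submodule ℝ (Fin n → ℝ)) (I : Fin n → Set ℝ),
    (∀ i, (I i).Nonempty) → (∀ i, (I i).OrdConnected) →
    (Finset.univ.filter (fun i => ¬ (I i).Subsingleton)).card ≤ N →
    (¬∃ x ∈ V, ∀ i, x i ∈ I i) →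
    ∃ v : Fin n → ℝ, (∀ x ∈ V, ∑ i, v i * x i = 0) ∧
      ∀ z : Fin n → ℝ, (∀ i, z i ∈ I i) → 0 < ∑ i, v i * z i := by
  classical
  intro N
  induction N with
  | zero =>
    intro V I hne hconn hcard hempty
    obtain ⟨v, hperp, hpos, z1, hz1, hz1pos⟩ := minty_sep V I hne hconn hempty
    refine ⟨v, hperp, ?_⟩
    intro z hz
    rcases lt_or_eq_of_le (hpos z hz) with h | h
    · exact h
    -- dot v z = 0; derive contradiction using singletons
    exfalso
    have hall : ∀ i, (I i).Subsingleton := by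
      intro i
      by_contra hcon
      have : i ∈ Finset.univ.filter (fun i => ¬ (I i).Subsingleton) := by
        rw [Finset.mem_filter]; exact ⟨Finset.mem_univ i, hcon⟩
      have := Finset.card_pos.mpr ⟨i, this⟩
      omega
    have : ∑ i, v i * z1 i = ∑ i, v i * z i := by
      apply Finset.sum_congr rfl
      intro i _
      rw [hall i (hz1 i) (hz i)]
    rw [this, ← h] at hz1pos
    exact lt_irrefl _ hz1pos
  | succ N ih =>
    intro V I hne hconn hcard hempty
    obtain ⟨v, hperp, hpos, z1, hz1, hz1pos⟩ := minty_sep V I hne hconn hempty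
    by_cases hgood : ∀ z : Fin n → ℝ, (∀ i, z i ∈ I i) → 0 < ∑ i, v i * z i
    · exact ⟨v, hperp, hgood⟩
    push_neg at hgood
    obtain ⟨z0, hz0, hz0le⟩ := hgood
    have hz0eq : ∑ i, v i * z0 i = 0 := le_antisymm hz0le (hpos z0 hz0)
    -- coordinatewise minimality
    have hmin : ∀ i, ∀ t ∈ I i, v i * z0 i ≤ v i * t := by
      intro i t ht
      have h1 := hpos _ (update_memK hz0 ht)
      rw [dot_update, hz0eq] at h1
      nlinarith
    -- some coordinate with v i ≠ 0 and I i not a subsingleton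
    have hvex : ∃ i, v i ≠ 0 ∧ ¬ (I i).Subsingleton := by
      by_contra hcon
      push_neg at hcon
      have : ∑ i, v i * z1 i = ∑ i, v i * z0 i := by
        apply Finset.sum_congr rfl
        intro i _
        by_cases hvi : v i = 0
        · simp [hvi]
        · rw [hcon i hvi (hz1 i) (hz0 i)]
      rw [this, hz0eq] at hz1pos
      exact lt_irrefl _ hz1pos
    obtain ⟨i₀, hi₀v, hi₀s⟩ := hvex
    -- the smaller face
    set J : Fin n → Set ℝ := fun i => if v i = 0 then I i else {z0 i} with hJ
    have hJne : ∀ i, (J i).Nonempty := by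
      intro i
      rw [hJ]
      by_cases h : v i = 0 <;> simp [h, hne i]
    have hJconn : ∀ i, (J i).OrdConnected := by
      intro i
      rw [hJ]
      by_cases h : v i = 0 <;> simp [h, hconn i, Set.ordConnected_singleton]
    have hJsub : ∀ i, J i ⊆ I i := by
      intro i
      rw [hJ]
      by_cases h : v i = 0
      · simp [h]
      · simp only [if_neg h, Set.singleton_subset_iff]
        exact hz0 i
    have hJempty : ¬∃ x ∈ V, ∀ i, x i ∈ J i := by
      rintro ⟨x, hx, hxi⟩
      exact hempty ⟨x, hx, fun i => hJsub i (hxi i)⟩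
    have hJcard : (Finset.univ.filter (fun i => ¬ (J i).Subsingleton)).card ≤ N := by
      have hsub : Finset.univ.filter (fun i => ¬ (J i).Subsingleton) ⊆
          (Finset.univ.filter (fun i => ¬ (I i).Subsingleton)).erase i₀ := by
        intro j hj
        rw [Finset.mem_filter] at hj
        rw [Finset.mem_erase, Finset.mem_filter]
        have hvj : v j = 0 := by
          by_contra hvj
          exact hj.2 (by rw [hJ]; simp [hvj])
        refine ⟨?_, Finset.mem_univ j, ?_⟩
        · intro hji; rw [hji] at hvj; exact hi₀v hvj
        · intro hcon
          exact hj.2 (by rw [hJ]; simpa [hvj] using hcon)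
      have h1 := Finset.card_le_card hsub
      have h2 : i₀ ∈ Finset.univ.filter (fun i => ¬ (I i).Subsingleton) := by
        rw [Finset.mem_filter]; exact ⟨Finset.mem_univ i₀, hi₀s⟩
      have h3 := Finset.card_erase_of_mem h2
      omega
    obtain ⟨w, hwperp, hwpos⟩ := ih V J hJne hJconn hJcard hJempty
    -- combine
    set t : ℝ := ∑ i, (if v i = 0 then 0 else |w i / v i|) with htdef
    have htge : ∀ i, v i ≠ 0 → -(w i / v i) ≤ t := by
      intro i hi
      have h1 : |w i / v i| ≤ t := by
        rw [htdef]
        have := Finset.single_le_sum (f := fun j => if v j = 0 then 0 else |w j / v j|)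
          (fun j _ => by positivity) (Finset.mem_univ i)
        simpa [hi] using this
      calc -(w i / v i) ≤ |w i / v i| := neg_le_abs _
        _ ≤ t := h1
    refine ⟨fun i => w i + t * v i, ?_, ?_⟩
    · intro x hx
      have h1 := hwperp x hx
      have h2 := hperp x hx
      have : ∑ i, (w i + t * v i) * x i = (∑ i, w i * x i) + t * ∑ i, v i * x i := by
        rw [Finset.mul_sum, ← Finset.sum_add_distrib]
        apply Finset.sum_congr rfl
        intro j _
        ring
      rw [this, h1, h2]; ring
    · intro z hz
      set zs : Fin n → ℝ := fun i => if v i = 0 then z i else z0 i with hzs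
      have hzsF : ∀ i, zs i ∈ J i := by
        intro i
        rw [hzs, hJ]
        by_cases h : v i = 0 <;> simp [h, hz i]
      have hws := hwpos zs hzsF
      have key : ∑ i, (w i + t * v i) * z i =
          (∑ i, w i * zs i) + (∑ i, (if v i = 0 then 0 else (w i + t * v i) * (z i - z0 i)))
          + t * ∑ i, v i * z0 i := by
        rw [Finset.mul_sum, ← Finset.sum_add_distrib, ← Finset.sum_add_distrib]
        apply Finset.sum_congr rfl
        intro j _
        have hzsj : zs j = if v j = 0 then z j else z0 j := rfl
        by_cases h : v j = 0
        · rw [hzsj, if_pos h, if_pos h, h]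
          ring
        · rw [hzsj, if_neg h, if_neg h]
          ring
      have hterm : ∀ i, 0 ≤ (if v i = 0 then 0 else (w i + t * v i) * (z i - z0 i)) := by
        intro i
        by_cases h : v i = 0
        · simp [h]
        · rw [if_neg h]
          have h1 : 0 ≤ v i * (z i - z0 i) := by
            have := hmin i (z i) (hz i)
            nlinarith
          have h2 : 0 ≤ w i / v i + t := by
            have := htge i h
            linarith
          have h3 : w i + t * v i = (w i / v i + t) * v i := by
            field_simp
          rw [h3, mul_assoc]
          exact mul_nonneg h2 h1
      rw [key, hz0eq]
      have hsum : 0 ≤ ∑ i, (if v i = 0 then 0 else (w i + t * v i) * (z i - z0 i)) :=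
        Finset.sum_nonneg (fun i _ => hterm i)
      linarith

lemma ratio_nonneg {a b : ℝ} (h : 0 ≤ a * b) : 0 ≤ a / b := by
  by_cases hb : b = 0
  · simp [hb]
  · have h1 : a / b = (a * b) / b ^ 2 := by
      field_simp
    rw [h1]
    exact div_nonneg h (sq_nonneg b)

lemma elem_refine {n : ℕ} (V : Submodule ℝ (Fin n → ℝ)) (I : Fin n → Set ℝ)
    (hne : ∀ i, (I i).Nonempty) :
    ∀ (m : ℕ) (v : Fin n → ℝ), v ∈ perp V →
    (∀ z : Fin n → ℝ, (∀ i, z i ∈ I i) → 0 < ∑ i, v i * z i) →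
    (Finset.univ.filter (fun i => v i ≠ 0)).card ≤ m →
    ∃ w, IsElementary (perp V) w ∧
      ∀ z : Fin n → ℝ, (∀ i, z i ∈ I i) → 0 < ∑ i, w i * z i := by
  classical
  have hzb : ∀ i, (fun i => (hne i).choose) i ∈ I i := fun i => (hne i).choose_spec
  set zb : Fin n → ℝ := fun i => (hne i).choose with hzbdef
  intro m
  induction m with
  | zero =>
    intro v hvP hgood hcard
    exfalso
    have hv0 : v = 0 := by
      funext i
      by_contra hvi
      have : i ∈ Finset.univ.filter (fun i => v i ≠ 0) := by
        rw [Finset.mem_filter]; exact ⟨Finset.mem_univ i, hvi⟩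
      have := Finset.card_pos.mpr ⟨i, this⟩
      omega
    have := hgood zb hzb
    rw [hv0] at this
    simp at this
  | succ m ih =>
    intro v hvP hgood hcard
    by_cases helem : IsElementary (perp V) v
    · exact ⟨v, helem, hgood⟩
    have hv0 : v ≠ 0 := by
      intro h
      have := hgood zb hzb
      rw [h] at this
      simp at this
    have h3 : ¬ (∀ x ∈ perp V, x ≠ 0 → {i | x i ≠ 0} ⊆ {i | v i ≠ 0} →
        {i | x i ≠ 0} = {i | v i ≠ 0}) := by
      intro hc
      exact helem ⟨hvP, hv0, hc⟩
    push_neg at h3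
    obtain ⟨x, hxP, hx0, hxsub, hxne⟩ := h3
    -- support of v
    set S : Finset (Fin n) := Finset.univ.filter (fun i => v i ≠ 0) with hSdef
    have hSmem : ∀ i, i ∈ S ↔ v i ≠ 0 := by
      intro i
      rw [hSdef, Finset.mem_filter]
      simp
    have hSne : S.Nonempty := by
      obtain ⟨i, hi⟩ := Function.ne_iff.mp hv0
      exact ⟨i, (hSmem i).mpr hi⟩
    -- lower bounds
    have hBdd : ∀ i, v i ≠ 0 → BddBelow ((fun t => v i * t) '' I i) := by
      intro i hvi
      by_contra hb
      rw [not_bddBelow_iff] at hb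
      obtain ⟨y, ⟨t, ht, hyt⟩, hy⟩ := hb (v i * zb i - (∑ j, v j * zb j))
      have h1 := hgood _ (update_memK hzb ht)
      rw [dot_update] at h1
      have hy' : v i * t < v i * zb i - ∑ j, v j * zb j := hyt.trans_lt hy
      nlinarith
    set B : Fin n → ℝ := fun i => sInf ((fun t => v i * t) '' I i) with hBdef
    have hBle : ∀ i, v i ≠ 0 → ∀ t ∈ I i, B i ≤ v i * t := by
      intro i hvi t ht
      exact csInf_le (hBdd i hvi) ⟨t, ht, rfl⟩
    have hBlt : ∀ i, v i ≠ 0 → ∀ ε : ℝ, 0 < ε → ∃ t ∈ I i, v i * t < B i + ε := by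
      intro i hvi ε hε
      have hne' : ((fun t => v i * t) '' I i).Nonempty := ⟨v i * zb i, ⟨zb i, hzb i, rfl⟩⟩
      obtain ⟨a, ⟨t, ht, hat⟩, ha⟩ := exists_lt_of_csInf_lt hne' (lt_add_of_pos_right (B i) hε)
      have hat' : v i * t = a := hat
      exact ⟨t, ht, hat'.trans_lt ha⟩
    set φ : (Fin n → ℝ) → ℝ := fun u => ∑ i ∈ S, (u i / v i) * B i with hφdef
    -- conformality: (v i = 0 → u i = 0) ∧ 0 ≤ u i * v i
    have hterm_le : ∀ u : Fin n → ℝ, (∀ i, (v i = 0 → u i = 0) ∧ 0 ≤ u i * v i) →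
        ∀ z : Fin n → ℝ, (∀ i, z i ∈ I i) →
        ∀ i ∈ S, (u i / v i) * B i ≤ u i * z i := by
      intro u hconf z hz i hi
      have hvi := (hSmem i).mp hi
      have hq : 0 ≤ u i / v i := ratio_nonneg (hconf i).2
      have hB := hBle i hvi (z i) (hz i)
      calc (u i / v i) * B i ≤ (u i / v i) * (v i * z i) :=
            mul_le_mul_of_nonneg_left hB hq
        _ = u i * z i := by field_simp
    have hdot_eq : ∀ u : Fin n → ℝ, (∀ i, v i = 0 → u i = 0) → ∀ z : Fin n → ℝ,
        ∑ i, u i * z i = ∑ i ∈ S, u i * z i := by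
      intro u hu z
      symm
      apply Finset.sum_subset (Finset.subset_univ S)
      intro i _ hiS
      have : v i = 0 := by
        by_contra hvi
        exact hiS ((hSmem i).mpr hvi)
      rw [hu i this, zero_mul]
    have hL2 : ∀ u : Fin n → ℝ, (∀ i, (v i = 0 → u i = 0) ∧ 0 ≤ u i * v i) →
        ∀ z : Fin n → ℝ, (∀ i, z i ∈ I i) → φ u ≤ ∑ i, u i * z i := by
      intro u hconf z hz
      rw [hdot_eq u (fun i => (hconf i).1) z]
      exact Finset.sum_le_sum (hterm_le u hconf z hz)
    have hφv_eq : φ v = ∑ i ∈ S, B i := by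
      apply Finset.sum_congr rfl
      intro i hi
      rw [div_self ((hSmem i).mp hi), one_mul]
    have hφv : 0 ≤ φ v := by
      by_contra hneg
      push_neg at hneg
      set ε : ℝ := -φ v / (n + 1) with hεdef
      have hε : 0 < ε := by
        rw [hεdef]
        apply div_pos (by linarith) (by positivity)
      set z : Fin n → ℝ := fun i => if h : v i ≠ 0 then (hBlt i h ε hε).choose else zb i
        with hzdef
      have hzK : ∀ i, z i ∈ I i := by
        intro i
        rw [hzdef]
        by_cases h : v i ≠ 0
        · simp only [dif_pos h]
          exact (hBlt i h ε hε).choose_spec.1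
        · simp only [dif_neg h]
          exact hzb i
      have hzlt : ∀ i ∈ S, v i * z i < B i + ε := by
        intro i hi
        have h := (hSmem i).mp hi
        rw [hzdef]
        simp only [dif_pos h]
        exact (hBlt i h ε hε).choose_spec.2
      have h1 : ∑ i, v i * z i < ∑ i ∈ S, (B i + ε) := by
        rw [hdot_eq v (fun i hvi => hvi) z]
        exact Finset.sum_lt_sum_of_nonempty hSne hzlt
      have h2 : ∑ i ∈ S, (B i + ε) = φ v + S.card * ε := by
        rw [Finset.sum_add_distrib, Finset.sum_const, hφv_eq, nsmul_eq_mul]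
      have h3 : (S.card : ℝ) * ε ≤ (n + 1) * ε := by
        apply mul_le_mul_of_nonneg_right _ hε.le
        have := Finset.card_le_univ S
        rw [Fintype.card_fin] at this
        push_cast
        exact_mod_cast le_trans (Nat.cast_le.mpr this) (by linarith : (n : ℝ) ≤ n + 1)
      have h4 : (n + 1 : ℝ) * ε = -φ v := by
        rw [hεdef]
        field_simp
      have := hgood z hzK
      linarith
    have hattain : φ v = 0 → ∃ i ∈ S, ¬ ∃ t ∈ I i, v i * t = B i := by
      intro h0
      by_contra hcon
      push_neg at hcon
      set z : Fin n → ℝ := fun i => if h : v i ≠ 0 then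
          (hcon i ((hSmem i).mpr h)).choose else zb i with hzdef
      have hzK : ∀ i, z i ∈ I i := by
        intro i
        rw [hzdef]
        by_cases h : v i ≠ 0
        · simp only [dif_pos h]
          exact (hcon i ((hSmem i).mpr h)).choose_spec.1
        · simp only [dif_neg h]
          exact hzb i
      have heq : ∑ i, v i * z i = 0 := by
        rw [hdot_eq v (fun i hvi => hvi) z, ← h0, hφv_eq]
        apply Finset.sum_congr rfl
        intro i hi
        have h := (hSmem i).mp hi
        rw [hzdef]
        simp only [dif_pos h]
        exact (hcon i ((hSmem i).mpr h)).choose_spec.2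
      have := hgood z hzK
      linarith
    have hL5 : ∀ u : Fin n → ℝ, (∀ i, (v i = 0 → u i = 0) ∧ 0 ≤ u i * v i) →
        (0 < φ u ∨ (φ u = 0 ∧ ∃ i, u i ≠ 0 ∧ ¬ ∃ t ∈ I i, v i * t = B i)) →
        ∀ z : Fin n → ℝ, (∀ i, z i ∈ I i) → 0 < ∑ i, u i * z i := by
      intro u hconf hcase z hz
      have hge := hL2 u hconf z hz
      rcases hcase with h | ⟨hφ0, i0, hui0, hna⟩
      · linarith
      rcases lt_or_eq_of_le (by rw [← hφ0]; exact hge : (0:ℝ) ≤ ∑ i, u i * z i) with h | h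
      · exact h
      exfalso
      have hvi0 : v i0 ≠ 0 := by
        intro hc
        exact hui0 ((hconf i0).1 hc)
      have hi0S : i0 ∈ S := (hSmem i0).mpr hvi0
      have hsum0 : ∑ i ∈ S, (u i * z i - (u i / v i) * B i) = 0 := by
        rw [Finset.sum_sub_distrib, ← hdot_eq u (fun i => (hconf i).1) z, ← h]
        simp only [hφdef] at hφ0
        rw [hφ0]
        ring
      have hterm0 := (Finset.sum_eq_zero_iff_of_nonneg
        (fun i hi => sub_nonneg.mpr (hterm_le u hconf z hz i hi))).mp hsum0 i0 hi0S
      have heq : u i0 * z i0 = (u i0 / v i0) * B i0 := by linarith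
      have h5 : u i0 * z i0 * v i0 = u i0 * B i0 := by
        rw [heq]
        field_simp
      have h6 : v i0 * z i0 = B i0 := by
        have := mul_left_cancel₀ hui0 (show u i0 * (v i0 * z i0) = u i0 * B i0 by
          linear_combination h5)
        exact this
      exact hna ⟨z i0, hz i0, h6⟩
    -- ratios and candidate machinery
    set r : Fin n → ℝ := fun j => v j / x j with hrdef
    have hxv : ∀ j, x j ≠ 0 → v j ≠ 0 := fun j hj => hxsub hj
    have hrne : ∀ j, x j ≠ 0 → r j ≠ 0 := fun j hj => div_ne_zero (hxv j hj) hj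
    have hvr : ∀ j, x j ≠ 0 → v j = x j * r j := by
      intro j hj
      rw [hrdef]
      field_simp
    set Tp : Finset (Fin n) := Finset.univ.filter (fun j => x j ≠ 0 ∧ 0 < r j) with hTpdef
    set Tm : Finset (Fin n) := Finset.univ.filter (fun j => x j ≠ 0 ∧ r j < 0) with hTmdef
    have hTpmem : ∀ j, j ∈ Tp ↔ (x j ≠ 0 ∧ 0 < r j) := by
      intro j; rw [hTpdef, Finset.mem_filter]; simp
    have hTmmem : ∀ j, j ∈ Tm ↔ (x j ≠ 0 ∧ r j < 0) := by
      intro j; rw [hTmdef, Finset.mem_filter]; simp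
    have hTcover : ∀ j, x j ≠ 0 → j ∈ Tp ∨ j ∈ Tm := by
      intro j hj
      rcases (hrne j hj).lt_or_gt with h | h
      · exact Or.inr ((hTmmem j).mpr ⟨hj, h⟩)
      · exact Or.inl ((hTpmem j).mpr ⟨hj, h⟩)
    obtain ⟨jx, hjx⟩ := Function.ne_iff.mp hx0
    -- witness that supp x is strictly smaller
    have hkillx : ∃ j, v j ≠ 0 ∧ x j = 0 := by
      have hss : {i | x i ≠ 0} ⊂ {i | v i ≠ 0} := hxsub.ssubset_of_ne hxne
      obtain ⟨j, hj1, hj2⟩ := Set.exists_of_ssubset hss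
      exact ⟨j, hj1, not_not.mp hj2⟩
    set χ : ℝ := φ x with hχdef
    -- generic candidate v - s x
    have hgen : ∀ s : ℝ, (∀ j, x j ≠ 0 → 0 < r j → s ≤ r j) →
        (∀ j, x j ≠ 0 → r j < 0 → r j ≤ s) →
        ((fun i => v i - s * x i) ∈ perp V ∧
         (∀ i, (v i = 0 → v i - s * x i = 0) ∧ 0 ≤ (v i - s * x i) * v i) ∧
         φ (fun i => v i - s * x i) = φ v - s * χ) := by
      intro s hs1 hs2
      refine ⟨?_, ?_, ?_⟩
      · have hEq : (fun i => v i - s * x i) = v - s • x := by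
          funext i
          simp
        rw [hEq]
        exact Submodule.sub_mem _ hvP (Submodule.smul_mem _ s hxP)
      · intro i
        by_cases hxi : x i = 0
        · constructor
          · intro hvi; rw [hxi, hvi]; ring
          · rw [hxi]
            ring_nf
            nlinarith [sq_nonneg (v i)]
        · have hvi := hxv i hxi
          constructor
          · intro hc; exact absurd hc hvi
          · rw [hvr i hxi]
            have hr : 0 ≤ r i * (r i - s) := by
              rcases (hrne i hxi).lt_or_gt with h | h
              · have := hs2 i hxi h
                nlinarith
              · have := hs1 i hxi h
                nlinarith
            nlinarith [sq_nonneg (x i)]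
      · rw [hφdef, hχdef]
        simp only
        rw [Finset.mul_sum, ← Finset.sum_sub_distrib]
        apply Finset.sum_congr rfl
        intro i hi
        have hvi := (hSmem i).mp hi
        have h1 : (v i - s * x i) / v i = 1 - s * (x i / v i) := by
          field_simp
        rw [h1]
        have h2 : φ v = φ v := rfl
        field_simp
      -- done hgen
    -- finishing move: any conformal candidate with smaller support finishes via IH
    have hfinish : ∀ u : Fin n → ℝ, u ∈ perp V →
        (∀ i, (v i = 0 → u i = 0) ∧ 0 ≤ u i * v i) →
        (∃ j, v j ≠ 0 ∧ u j = 0) →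
        (0 < φ u ∨ (φ u = 0 ∧ ∃ i, u i ≠ 0 ∧ ¬ ∃ t ∈ I i, v i * t = B i)) →
        ∃ w, IsElementary (perp V) w ∧
          ∀ z : Fin n → ℝ, (∀ i, z i ∈ I i) → 0 < ∑ i, w i * z i := by
      rintro u huP huconf ⟨j0, hj0v, hj0u⟩ hcrit
      have hugood := hL5 u huconf hcrit
      have hsubS : Finset.univ.filter (fun i => u i ≠ 0) ⊆ S := by
        intro j hj
        rw [Finset.mem_filter] at hj
        rw [hSmem]
        intro hvj
        exact hj.2 ((huconf j).1 hvj)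
      have hss : Finset.univ.filter (fun i => u i ≠ 0) ⊂ S := by
        rw [Finset.ssubset_iff_of_subset hsubS]
        exact ⟨j0, (hSmem j0).mpr hj0v, by simp [Finset.mem_filter, hj0u]⟩
      have hcards : (Finset.univ.filter (fun i => u i ≠ 0)).card ≤ m := by
        have := Finset.card_lt_card hss
        omega
      exact ih u huP hugood hcards
    -- packaged data for the two finite endpoints
    have hTp_pack : ∀ h : Tp.Nonempty, 0 < Tp.inf' h r ∧
        (∀ j, x j ≠ 0 → 0 < r j → Tp.inf' h r ≤ r j) ∧
        (∀ j, x j ≠ 0 → r j < 0 → r j ≤ Tp.inf' h r) ∧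
        ∃ jp, v jp ≠ 0 ∧ v jp - Tp.inf' h r * x jp = 0 := by
      intro h
      have hpos : 0 < Tp.inf' h r := by
        rw [Finset.lt_inf'_iff]
        intro j hj
        exact ((hTpmem j).mp hj).2
      refine ⟨hpos, ?_, ?_, ?_⟩
      · intro j hj hr
        exact Finset.inf'_le r ((hTpmem j).mpr ⟨hj, hr⟩)
      · intro j hj hr
        exact le_of_lt (hr.trans hpos)
      · obtain ⟨jp, hjpT, hjps⟩ := Finset.exists_mem_eq_inf' h r
        have hjpx : x jp ≠ 0 := ((hTpmem jp).mp hjpT).1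
        refine ⟨jp, hxv jp hjpx, ?_⟩
        rw [hjps, hvr jp hjpx]
        ring
    have hTm_pack : ∀ h : Tm.Nonempty, Tm.sup' h r < 0 ∧
        (∀ j, x j ≠ 0 → 0 < r j → Tm.sup' h r ≤ r j) ∧
        (∀ j, x j ≠ 0 → r j < 0 → r j ≤ Tm.sup' h r) ∧
        ∃ jm, v jm ≠ 0 ∧ v jm - Tm.sup' h r * x jm = 0 := by
      intro h
      have hneg : Tm.sup' h r < 0 := by
        rw [Finset.sup'_lt_iff]
        intro j hj
        exact ((hTmmem j).mp hj).2
      refine ⟨hneg, ?_, ?_, ?_⟩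
      · intro j hj hr
        exact le_of_lt (hneg.trans hr)
      · intro j hj hr
        exact Finset.le_sup' r ((hTmmem j).mpr ⟨hj, hr⟩)
      · obtain ⟨jm, hjmT, hjms⟩ := Finset.exists_mem_eq_sup' h r
        have hjmx : x jm ≠ 0 := ((hTmmem jm).mp hjmT).1
        refine ⟨jm, hxv jm hjmx, ?_⟩
        rw [hjms, hvr jm hjmx]
        ring
    -- the ±x candidates when all ratios have one sign
    have hnegx_case : (∀ j, x j ≠ 0 → r j < 0) →
        ((fun i => -x i) ∈ perp V ∧
         (∀ i, (v i = 0 → -x i = 0) ∧ 0 ≤ -x i * v i) ∧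
         φ (fun i => -x i) = -χ) := by
      intro hall
      refine ⟨?_, ?_, ?_⟩
      · have hEq : (fun i => -x i) = -x := by funext i; simp
        rw [hEq]
        exact Submodule.neg_mem _ hxP
      · intro i
        by_cases hxi : x i = 0
        · rw [hxi]; constructor
          · intro _; ring
          · ring_nf; exact le_refl 0
        · constructor
          · intro hc; exact absurd hc (hxv i hxi)
          · rw [hvr i hxi]
            have := hall i hxi
            nlinarith [sq_nonneg (x i)]
      · rw [hφdef, hχdef]
        simp only
        rw [← Finset.sum_neg_distrib]
        apply Finset.sum_congr rfl
        intro i hi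
        rw [neg_div, neg_mul]
    have hposx_case : (∀ j, x j ≠ 0 → 0 < r j) →
        (x ∈ perp V ∧
         (∀ i, (v i = 0 → x i = 0) ∧ 0 ≤ x i * v i) ∧
         φ x = χ) := by
      intro hall
      refine ⟨hxP, ?_, rfl⟩
      intro i
      by_cases hxi : x i = 0
      · rw [hxi]; exact ⟨fun _ => rfl, by ring_nf; exact le_refl 0⟩
      · constructor
        · intro hc; exact absurd hc (hxv i hxi)
        · rw [hvr i hxi]
          have := hall i hxi
          nlinarith [sq_nonneg (x i)]
    -- Tp empty forces all ratios negative, Tm empty forces all positive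
    have hTpe : ¬ Tp.Nonempty → ∀ j, x j ≠ 0 → r j < 0 := by
      intro h j hj
      rcases hTcover j hj with hc | hc
      · exact absurd ⟨j, hc⟩ h
      · exact ((hTmmem j).mp hc).2
    have hTme : ¬ Tm.Nonempty → ∀ j, x j ≠ 0 → 0 < r j := by
      intro h j hj
      rcases hTcover j hj with hc | hc
      · exact ((hTpmem j).mp hc).2
      · exact absurd ⟨j, hc⟩ h
    -- main case analysis
    rcases lt_trichotomy χ 0 with hχ | hχ | hχ
    · -- χ < 0 : move in the +x direction
      by_cases hTp : Tp.Nonempty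
      · obtain ⟨hs0, hb1, hb2, jp, hjpv, hjp0⟩ := hTp_pack hTp
        obtain ⟨hP, hC, hφeq⟩ := hgen (Tp.inf' hTp r) hb1 hb2
        refine hfinish _ hP hC ⟨jp, hjpv, hjp0⟩ (Or.inl ?_)
        rw [hφeq]
        nlinarith
      · obtain ⟨hP, hC, hφeq⟩ := hnegx_case (hTpe hTp)
        obtain ⟨j0, hj0v, hj0x⟩ := hkillx
        refine hfinish _ hP hC ⟨j0, hj0v, by rw [hj0x]; ring⟩ (Or.inl ?_)
        rw [hφeq]
        linarith
    · -- χ = 0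
      rcases lt_or_eq_of_le hφv with hφpos | hφ0
      · -- φ v > 0 : either finite endpoint works
        by_cases hTp : Tp.Nonempty
        · obtain ⟨hs0, hb1, hb2, jp, hjpv, hjp0⟩ := hTp_pack hTp
          obtain ⟨hP, hC, hφeq⟩ := hgen (Tp.inf' hTp r) hb1 hb2
          refine hfinish _ hP hC ⟨jp, hjpv, hjp0⟩ (Or.inl ?_)
          rw [hφeq, hχ]
          linarith
        · have hTm : Tm.Nonempty := by
            rcases hTcover jx hjx with hc | hc
            · exact absurd ⟨jx, hc⟩ hTp
            · exact ⟨jx, hc⟩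
          obtain ⟨hs1, hb1, hb2, jm, hjmv, hjm0⟩ := hTm_pack hTm
          obtain ⟨hP, hC, hφeq⟩ := hgen (Tm.sup' hTm r) hb1 hb2
          refine hfinish _ hP hC ⟨jm, hjmv, hjm0⟩ (Or.inl ?_)
          rw [hφeq, hχ]
          linarith
      · -- φ v = 0 : use the unattained index
        obtain ⟨istar, hiS, hina⟩ := hattain hφ0.symm
        have hvistar : v istar ≠ 0 := (hSmem istar).mp hiS
        by_cases hxistar : x istar = 0
        · -- i* untouched by x : any finite endpoint keeps it
          by_cases hTp : Tp.Nonempty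
          · obtain ⟨hs0, hb1, hb2, jp, hjpv, hjp0⟩ := hTp_pack hTp
            obtain ⟨hP, hC, hφeq⟩ := hgen (Tp.inf' hTp r) hb1 hb2
            refine hfinish _ hP hC ⟨jp, hjpv, hjp0⟩ (Or.inr ⟨?_, istar, ?_, hina⟩)
            · rw [hφeq, hχ, ← hφ0]; ring
            · rw [hxistar]
              simpa using hvistar
          · have hTm : Tm.Nonempty := by
              rcases hTcover jx hjx with hc | hc
              · exact absurd ⟨jx, hc⟩ hTp
              · exact ⟨jx, hc⟩
            obtain ⟨hs1, hb1, hb2, jm, hjmv, hjm0⟩ := hTm_pack hTm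
            obtain ⟨hP, hC, hφeq⟩ := hgen (Tm.sup' hTm r) hb1 hb2
            refine hfinish _ hP hC ⟨jm, hjmv, hjm0⟩ (Or.inr ⟨?_, istar, ?_, hina⟩)
            · rw [hφeq, hχ, ← hφ0]; ring
            · rw [hxistar]
              simpa using hvistar
        · rcases (hrne istar hxistar).lt_or_gt with hrs | hrs
          · -- r i* < 0 : move in the +x direction, i* survives
            by_cases hTp : Tp.Nonempty
            · obtain ⟨hs0, hb1, hb2, jp, hjpv, hjp0⟩ := hTp_pack hTp
              obtain ⟨hP, hC, hφeq⟩ := hgen (Tp.inf' hTp r) hb1 hb2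
              refine hfinish _ hP hC ⟨jp, hjpv, hjp0⟩ (Or.inr ⟨?_, istar, ?_, hina⟩)
              · rw [hφeq, hχ, ← hφ0]; ring
              · rw [hvr istar hxistar]
                have h1 : r istar - Tp.inf' hTp r ≠ 0 := by
                  intro hc
                  nlinarith
                intro hc
                apply h1
                have : x istar * (r istar - Tp.inf' hTp r) = 0 := by
                  rw [← hc]; ring
                rcases mul_eq_zero.mp this with h | h
                · exact absurd h hxistar
                · exact h
            · obtain ⟨hP, hC, hφeq⟩ := hnegx_case (hTpe hTp)
              obtain ⟨j0, hj0v, hj0x⟩ := hkillx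
              refine hfinish _ hP hC ⟨j0, hj0v, by rw [hj0x]; ring⟩
                (Or.inr ⟨?_, istar, ?_, hina⟩)
              · rw [hφeq, hχ]; ring
              · simpa using hxistar
          · -- r i* > 0 : move in the -x direction, i* survives
            by_cases hTm : Tm.Nonempty
            · obtain ⟨hs1, hb1, hb2, jm, hjmv, hjm0⟩ := hTm_pack hTm
              obtain ⟨hP, hC, hφeq⟩ := hgen (Tm.sup' hTm r) hb1 hb2
              refine hfinish _ hP hC ⟨jm, hjmv, hjm0⟩ (Or.inr ⟨?_, istar, ?_, hina⟩)
              · rw [hφeq, hχ, ← hφ0]; ring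
              · rw [hvr istar hxistar]
                have h1 : r istar - Tm.sup' hTm r ≠ 0 := by
                  intro hc
                  nlinarith
                intro hc
                apply h1
                have : x istar * (r istar - Tm.sup' hTm r) = 0 := by
                  rw [← hc]; ring
                rcases mul_eq_zero.mp this with h | h
                · exact absurd h hxistar
                · exact h
            · obtain ⟨hP, hC, hφeq⟩ := hposx_case (hTme hTm)
              obtain ⟨j0, hj0v, hj0x⟩ := hkillx
              refine hfinish _ hP hC ⟨j0, hj0v, hj0x⟩
                (Or.inr ⟨?_, istar, hxistar, hina⟩)
              rw [hφeq, hχ]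
    · -- χ > 0 : move in the -x direction
      by_cases hTm : Tm.Nonempty
      · obtain ⟨hs1, hb1, hb2, jm, hjmv, hjm0⟩ := hTm_pack hTm
        obtain ⟨hP, hC, hφeq⟩ := hgen (Tm.sup' hTm r) hb1 hb2
        refine hfinish _ hP hC ⟨jm, hjmv, hjm0⟩ (Or.inl ?_)
        rw [hφeq]
        nlinarith
      · obtain ⟨hP, hC, hφeq⟩ := hposx_case (hTme hTm)
        obtain ⟨j0, hj0v, hj0x⟩ := hkillx
        refine hfinish _ hP hC ⟨j0, hj0v, hj0x⟩ (Or.inl ?_)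
        rw [hφeq]
        linarith

end MintyAux

theorem minty_elementary {n : ℕ} (V : Submodule ℝ (Fin n → ℝ)) (I : Fin n → Set ℝ)
    (hne : ∀ i, (I i).Nonempty) (hconn : ∀ i, (I i).OrdConnected)
    (hempty : ¬∃ x ∈ V, ∀ i, x i ∈ I i) :
    ∃ v : Fin n → ℝ, IsElementary (perp V) v ∧
      ∀ z : Fin n → ℝ, (∀ i, z i ∈ I i) → 0 < ∑ i, v i * z i := by
  classical
  obtain ⟨v0, hv0perp, hv0good⟩ := minty_core n V I hne hconn
    (le_trans (Finset.card_filter_le _ _) (by simp)) hempty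
  have hv0P : v0 ∈ perp V := hv0perp
  exact elem_refine V I hne ((Finset.univ.filter (fun i => v0 i ≠ 0)).card) v0 hv0P hv0good
    le_rfl
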